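/- arXiv:1711.07006 — 4 statements merged into one kernel-verified Lean document; each statement's English description precedes it below -/
import Mathlib

section
/- For d = 2 there exist positive constants C, C', c, c' such that for all 0 < r ≤ δ: C'·(1 + |log(δ/r)|)·exp(-c'·r²/δ²) ≤ ∫₀^{δ²} t^{-1}·exp(-r²/(4t)) dt ≤ C·(1 + |log(δ/r)|)·exp(-c·r²/δ²). -/
open MeasureTheory Real

/-- Two-sided estimate for the time-truncated heat kernel integral in dimension `d = 2`:
for `0 < r ≤ δ`,
`C'(1+|log(δ/r)|)e^{-c' r²/δ²} ≤ ∫₀^{δ²} t^{-1} e^{-r²/(4t)} dt ≤ C(1+|log(δ/r)|)e^{-c r²/δ²}`. -/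
theorem heat_time_integral_estimate_dim_two :
    ∃ C C' c c' : ℝ, 0 < C ∧ 0 < C' ∧ 0 < c ∧ 0 < c' ∧
      ∀ r δ : ℝ, 0 < r → r ≤ δ →
        (C' * (1 + |Real.log (δ / r)|) * Real.exp (-c' * r ^ 2 / δ ^ 2)
            ≤ ∫ t in Set.Ioc (0:ℝ) (δ ^ 2), t⁻¹ * Real.exp (-r ^ 2 / (4 * t))) ∧
        (∫ t in Set.Ioc (0:ℝ) (δ ^ 2), t⁻¹ * Real.exp (-r ^ 2 / (4 * t)))
            ≤ C * (1 + |Real.log (δ / r)|) * Real.exp (-c * r ^ 2 / δ ^ 2) := by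
  refine ⟨4 * Real.exp 1, Real.exp (-(1/2)) * Real.log 2, 1, 1, by positivity,
    by positivity, one_pos, one_pos, fun r δ hr hrδ => ?_⟩
  have hδ : 0 < δ := lt_of_lt_of_le hr hrδ
  have hr2 : 0 < r ^ 2 := by positivity
  have hδ2 : 0 < δ ^ 2 := by positivity
  have hr2δ2 : r ^ 2 ≤ δ ^ 2 := by nlinarith
  set f : ℝ → ℝ := fun t => t⁻¹ * Real.exp (-r ^ 2 / (4 * t)) with hf
  set L : ℝ := Real.log (δ / r) with hLdef
  have hL : 0 ≤ L := Real.log_nonneg ((one_le_div hr).2 hrδ)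
  have habs : |Real.log (δ / r)| = L := abs_of_nonneg hL
  -- measurability
  have hm : Measurable f := by
    apply Measurable.mul measurable_inv
    exact (Measurable.div measurable_const (measurable_const.mul measurable_id)).exp
  -- pointwise nonneg on positive t
  have hfnn : ∀ t : ℝ, 0 < t → 0 ≤ f t := fun t ht => by positivity
  -- pointwise bound f t ≤ 4 / r^2 for t > 0
  have hbd : ∀ t : ℝ, 0 < t → f t ≤ 4 / r ^ 2 := by
    intro t ht
    have hx : 0 < r ^ 2 / (4 * t) := by positivity
    have hexp : Real.exp (-r ^ 2 / (4 * t)) ≤ (r ^ 2 / (4 * t))⁻¹ := by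
      rw [neg_div, Real.exp_neg]
      have h1 : r ^ 2 / (4 * t) ≤ Real.exp (r ^ 2 / (4 * t)) := by
        linarith [Real.add_one_le_exp (r ^ 2 / (4 * t))]
      exact inv_anti₀ hx h1
    calc f t ≤ t⁻¹ * (r ^ 2 / (4 * t))⁻¹ := by
          apply mul_le_mul_of_nonneg_left hexp (by positivity)
      _ = 4 / r ^ 2 := by field_simp
  -- integrability on Ioc 0 δ²
  have hint : IntegrableOn f (Set.Ioc 0 (δ ^ 2)) := by
    apply Integrable.mono' (g := fun _ => 4 / r ^ 2)
      (integrableOn_const measure_Ioc_lt_top.ne) hm.aestronglyMeasurable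
    filter_upwards [ae_restrict_mem measurableSet_Ioc] with t ht
    rw [Real.norm_eq_abs, abs_of_nonneg (hfnn t ht.1)]
    exact hbd t ht.1
  constructor
  · -- lower bound
    have hsub : Set.Ioc (r ^ 2 / 2) (δ ^ 2) ⊆ Set.Ioc 0 (δ ^ 2) :=
      Set.Ioc_subset_Ioc_left (by positivity)
    have h1 : ∫ t in Set.Ioc (r ^ 2 / 2) (δ ^ 2), f t ≤ ∫ t in Set.Ioc 0 (δ ^ 2), f t := by
      apply setIntegral_mono_set hint
      · filter_upwards [ae_restrict_mem measurableSet_Ioc] with t ht using hfnn t ht.1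
      · exact HasSubset.Subset.eventuallyLE hsub
    have hinv_int : IntegrableOn (fun t : ℝ => Real.exp (-(1/2)) * t⁻¹)
        (Set.Ioc (r ^ 2 / 2) (δ ^ 2)) := by
      apply Integrable.const_mul
      have : IntervalIntegrable (fun t : ℝ => t⁻¹) volume (r ^ 2 / 2) (δ ^ 2) := by
        apply intervalIntegral.intervalIntegrable_inv _ continuousOn_id
        intro x hx
        rw [Set.uIcc_of_le (by nlinarith)] at hx
        simp only [id_eq]
        exact ne_of_gt (by nlinarith [hx.1])
      exact (intervalIntegrable_iff_integrableOn_Ioc_of_le (by nlinarith)).1 this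
    have h2 : ∫ t in Set.Ioc (r ^ 2 / 2) (δ ^ 2), Real.exp (-(1/2)) * t⁻¹
        ≤ ∫ t in Set.Ioc (r ^ 2 / 2) (δ ^ 2), f t := by
      apply setIntegral_mono_on hinv_int (hint.mono_set hsub) measurableSet_Ioc
      intro t ht
      have ht0 : 0 < t := lt_of_le_of_lt (by positivity) ht.1
      have hxle : r ^ 2 / (4 * t) ≤ 1/2 := by
        rw [div_le_div_iff₀ (by positivity) (by norm_num)]
        nlinarith [ht.1]
      have : Real.exp (-(1/2)) ≤ Real.exp (-r ^ 2 / (4 * t)) := by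
        apply Real.exp_le_exp.2; rw [neg_div]; linarith
      calc Real.exp (-(1/2)) * t⁻¹ ≤ Real.exp (-r ^ 2 / (4 * t)) * t⁻¹ :=
            mul_le_mul_of_nonneg_right this (by positivity)
        _ = f t := by rw [hf]; ring
    have h3 : ∫ t in Set.Ioc (r ^ 2 / 2) (δ ^ 2), Real.exp (-(1/2)) * t⁻¹
        = Real.exp (-(1/2)) * (Real.log 2 + 2 * L) := by
      rw [← intervalIntegral.integral_of_le (by nlinarith), intervalIntegral.integral_const_mul,
        integral_inv]
      · congr 1
        have : δ ^ 2 / (r ^ 2 / 2) = 2 * (δ / r) ^ 2 := by field_simp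
        rw [this, Real.log_mul (by norm_num) (by positivity), Real.log_pow]
        push_cast; ring
      · rw [Set.uIcc_of_le (by nlinarith)]
        intro hx
        nlinarith [hx.1]
    have hexp1 : Real.exp (-1 * r ^ 2 / δ ^ 2) ≤ 1 := by
      apply Real.exp_le_one_iff.2
      rw [neg_one_mul, neg_div]
      simp only [Left.neg_nonpos_iff]
      positivity
    have hlog2 : 0 < Real.log 2 := Real.log_pos (by norm_num)
    have hlog2' : Real.log 2 ≤ 2 := by
      nlinarith [Real.log_two_lt_d9]
    calc Real.exp (-(1/2)) * Real.log 2 * (1 + |Real.log (δ / r)|) *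
            Real.exp (-1 * r ^ 2 / δ ^ 2)
        ≤ Real.exp (-(1/2)) * Real.log 2 * (1 + L) * 1 := by
          rw [habs]
          apply mul_le_mul_of_nonneg_left hexp1 (by positivity)
      _ ≤ Real.exp (-(1/2)) * (Real.log 2 + 2 * L) := by
          have he : 0 < Real.exp (-(1/2)) := Real.exp_pos _
          have hkey : Real.log 2 * (1 + L) ≤ Real.log 2 + 2 * L := by nlinarith
          calc Real.exp (-(1/2)) * Real.log 2 * (1 + L) * 1
              = Real.exp (-(1/2)) * (Real.log 2 * (1 + L)) := by ring
            _ ≤ Real.exp (-(1/2)) * (Real.log 2 + 2 * L) :=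
                mul_le_mul_of_nonneg_left hkey he.le
      _ = ∫ t in Set.Ioc (r ^ 2 / 2) (δ ^ 2), Real.exp (-(1/2)) * t⁻¹ := h3.symm
      _ ≤ ∫ t in Set.Ioc 0 (δ ^ 2), f t := le_trans h2 h1
  · -- upper bound
    have hii1 : IntervalIntegrable f volume 0 (r ^ 2) :=
      (intervalIntegrable_iff_integrableOn_Ioc_of_le hr2.le).2
        (hint.mono_set (Set.Ioc_subset_Ioc_right hr2δ2))
    have hii2 : IntervalIntegrable f volume (r ^ 2) (δ ^ 2) :=
      (intervalIntegrable_iff_integrableOn_Ioc_of_le hr2δ2).2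
        (hint.mono_set (Set.Ioc_subset_Ioc_left hr2.le))
    have hsplit : ∫ t in Set.Ioc (0:ℝ) (δ ^ 2), f t
        = (∫ t in (0:ℝ)..(r ^ 2), f t) + ∫ t in (r ^ 2)..(δ ^ 2), f t := by
      rw [intervalIntegral.integral_add_adjacent_intervals hii1 hii2,
        intervalIntegral.integral_of_le hδ2.le]
    have hb1 : ∫ t in (0:ℝ)..(r ^ 2), f t ≤ 4 := by
      have : ∫ t in (0:ℝ)..(r ^ 2), f t ≤ ∫ t in (0:ℝ)..(r ^ 2), (4 / r ^ 2 : ℝ) := by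
        apply intervalIntegral.integral_mono_on hr2.le hii1 (intervalIntegrable_const)
        intro t ht
        rcases eq_or_lt_of_le ht.1 with h | h
        · simp [hf, ← h]
          positivity
        · exact hbd t h
      rw [intervalIntegral.integral_const, smul_eq_mul] at this
      calc ∫ t in (0:ℝ)..(r ^ 2), f t ≤ (r ^ 2 - 0) * (4 / r ^ 2) := this
        _ = 4 := by field_simp; ring
    have hinvii : IntervalIntegrable (fun t : ℝ => t⁻¹) volume (r ^ 2) (δ ^ 2) := by
      apply intervalIntegral.intervalIntegrable_inv _ continuousOn_id
      intro x hx
      rw [Set.uIcc_of_le hr2δ2] at hx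
      simp only [id_eq]
      exact ne_of_gt (by nlinarith [hx.1])
    have hb2 : ∫ t in (r ^ 2)..(δ ^ 2), f t ≤ 2 * L := by
      have h4 : ∫ t in (r ^ 2)..(δ ^ 2), f t ≤ ∫ t in (r ^ 2)..(δ ^ 2), t⁻¹ := by
        apply intervalIntegral.integral_mono_on hr2δ2 hii2 hinvii
        intro t ht
        have ht0 : 0 < t := lt_of_lt_of_le hr2 ht.1
        have : Real.exp (-r ^ 2 / (4 * t)) ≤ 1 := by
          apply Real.exp_le_one_iff.2
          rw [neg_div]
          simp only [Left.neg_nonpos_iff]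
          positivity
        calc f t ≤ t⁻¹ * 1 := mul_le_mul_of_nonneg_left this (by positivity)
          _ = t⁻¹ := mul_one _
      have h5 : ∫ t in (r ^ 2)..(δ ^ 2), (t:ℝ)⁻¹ = 2 * L := by
        rw [integral_inv]
        · rw [hLdef, show δ ^ 2 / r ^ 2 = (δ / r) ^ 2 from (div_pow δ r 2).symm,
            Real.log_pow]
          push_cast; ring
        · rw [Set.uIcc_of_le hr2δ2]
          intro hx
          nlinarith [hx.1]
      linarith [h4, h5.le, h5.ge]
    have hexp2 : Real.exp (-1) ≤ Real.exp (-1 * r ^ 2 / δ ^ 2) := by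
      apply Real.exp_le_exp.2
      rw [neg_one_mul, neg_div, neg_le_neg_iff]
      exact div_le_one_of_le₀ hr2δ2 hδ2.le
    rw [hsplit, habs]
    have he1 : 0 < Real.exp 1 := Real.exp_pos 1
    have hee : Real.exp 1 * Real.exp (-1) = 1 := by
      rw [← Real.exp_add]; norm_num
    calc (∫ t in (0:ℝ)..(r ^ 2), f t) + ∫ t in (r ^ 2)..(δ ^ 2), f t
        ≤ 4 + 2 * L := add_le_add hb1 hb2
      _ = 4 * Real.exp 1 * (1 + (2 * L) / 4) * (Real.exp 1)⁻¹ := by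
          field_simp
      _ ≤ 4 * Real.exp 1 * (1 + L) * Real.exp (-1 * r ^ 2 / δ ^ 2) := by
          rw [show (Real.exp 1)⁻¹ = Real.exp (-1) from (Real.exp_neg 1).symm]
          have h6 : 4 * Real.exp 1 * (1 + (2 * L) / 4) ≤ 4 * Real.exp 1 * (1 + L) := by
            apply mul_le_mul_of_nonneg_left (by linarith) (by positivity)
          exact mul_le_mul h6 hexp2 (Real.exp_pos _).le (by positivity)
end

section
/- Let (X_t) be standard Brownian motion in ℝ^d (d > 2) started at x, let K ⊂ B(x,1) be compact satisfying the two-sided Minkowski regularity conditions with exponent α ∈ (d-2, d), and set K'_n = K_{a^n} \ K_{a^{n+1}} for a suitable constant a ∈ (0,1), Z_n = ∫₀^{δ²} 1_{K'_n}(X_s) ds with x ∈ K. Then there is a constant C > 0 independent of n and δ such that for all n with a^n ≤ δ² ≤ 1: E(Z_n) ≥ C·a^{n(d-α)}·δ^{2-d+α}. -/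
open MeasureTheory Metric ProbabilityTheory

/-- The Gaussian heat kernel `p_t(x,y) = (4πt)^{-d/2} exp(-|x-y|²/(4t))` on `ℝ^d`. -/
noncomputable def heatKernel (d : ℕ) (t : ℝ) (x y : EuclideanSpace ℝ (Fin d)) : ℝ :=
  (4 * Real.pi * t) ^ (-(d : ℝ) / 2) * Real.exp (-(dist x y) ^ 2 / (4 * t))

/-- `X` is a standard Brownian motion in `ℝ^d` under `P`, started at `x₀`. -/
structure IsBrownianMotion {Ω : Type*} [MeasurableSpace Ω] (P : Measure Ω) (d : ℕ)
    (X : ℝ → Ω → EuclideanSpace ℝ (Fin d)) (x₀ : EuclideanSpace ℝ (Fin d)) : Prop where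
  isProb : IsProbabilityMeasure P
  meas : Measurable fun p : ℝ × Ω => X p.1 p.2
  start : ∀ᵐ ω ∂P, X 0 ω = x₀
  cont : ∀ᵐ ω ∂P, Continuous fun t => X t ω
  incr : ∀ s t : ℝ, 0 ≤ s → s < t →
    ∀ A : Set (EuclideanSpace ℝ (Fin d)), MeasurableSet A →
      (P {ω | X t ω - X s ω ∈ A}).toReal = ∫ y in A, heatKernel d (t - s) 0 y
  indep : ∀ (n : ℕ) (u : ℕ → ℝ), Monotone u → 0 ≤ u 0 →
    iIndepFun
      (fun i : Fin n => fun ω => X (u (i + 1)) ω - X (u (i : ℕ)) ω) P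

set_option maxHeartbeats 1000000 in
/-- First-moment lower bound: for Brownian motion started at `x ∈ K`, where
`K ⊆ B(x,1)` is compact satisfying the two-sided Minkowski regularity conditions with
exponent `α ∈ (d-2, d)`, the occupation time
`Z_n = ∫₀^{δ²} 1_{K'_n}(X_s) ds` of the shell `K'_n = K_{a^n} \ K_{a^{n+1}}` satisfies
`E(Z_n) ≥ C a^{n(d-α)} δ^{2-d+α}` whenever `a^n ≤ δ² ≤ 1`. -/
theorem occupation_time_first_moment_lower_bound
    (d : ℕ) (hd : 2 < d)
    {Ω : Type*} [MeasurableSpace Ω] (P : Measure Ω)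
    (x : EuclideanSpace ℝ (Fin d))
    (X : ℝ → Ω → EuclideanSpace ℝ (Fin d))
    (hBM : IsBrownianMotion P d X x)
    (K : Set (EuclideanSpace ℝ (Fin d))) (hKcpt : IsCompact K)
    (hxK : x ∈ K) (hKball : K ⊆ closedBall x 1)
    (α : ℝ) (hα1 : (d : ℝ) - 2 < α) (hα2 : α < d)
    (C₁ C₂ : ℝ) (hC₁ : 0 < C₁) (hC₂ : 0 < C₂)
    (hupper : ∀ (y : EuclideanSpace ℝ (Fin d)) (r γ : ℝ), 0 < γ → γ ≤ r → r ≤ 1 →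
      volume (cthickening γ K ∩ closedBall y r)
        ≤ ENNReal.ofReal (C₁ * r ^ α * γ ^ ((d : ℝ) - α)))
    (hlower : ∀ (y : EuclideanSpace ℝ (Fin d)) (r γ : ℝ), 0 < γ → γ ≤ r → r ≤ 1 →
      y ∈ cthickening (r / 2) K →
      ENNReal.ofReal (C₂ * r ^ α * γ ^ ((d : ℝ) - α))
        ≤ volume (cthickening γ K ∩ closedBall y r))
    (a : ℝ) (ha0 : 0 < a) (ha1 : a < 1)
    (haC : C₁ * a ^ ((d : ℝ) - α) ≤ C₂ / 2) :
    ∃ C : ℝ, 0 < C ∧ ∀ (δ : ℝ) (n : ℕ), 0 < δ → a ^ n ≤ δ ^ 2 → δ ^ 2 ≤ 1 →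
      C * a ^ ((n : ℝ) * ((d : ℝ) - α)) * δ ^ ((2 : ℝ) - d + α)
        ≤ ∫ ω, (∫ s in Set.Ioc (0 : ℝ) (δ ^ 2),
            Set.indicator (cthickening (a ^ n) K \ cthickening (a ^ (n + 1)) K)
              (fun _ => (1 : ℝ)) (X s ω)) ∂P := by
  haveI := hBM.isProb
  have hπ : (0:ℝ) < 4 * Real.pi := by positivity
  refine ⟨C₂ / 4 * Real.exp (-(1/2 : ℝ)) * (4 * Real.pi) ^ (-(d:ℝ)/2), by positivity, ?_⟩
  intro δ n hδ han hδ1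
  have hδle1 : δ ≤ 1 := by nlinarith
  have hδ2δ : δ ^ 2 ≤ δ := by nlinarith
  set S := cthickening (a ^ n) K \ cthickening (a ^ (n+1)) K with hSdef
  have hS : MeasurableSet S :=
    (isClosed_cthickening.measurableSet).diff isClosed_cthickening.measurableSet
  set B₀ := S ∩ closedBall x δ with hB₀def
  have hB₀meas : MeasurableSet B₀ := hS.inter measurableSet_closedBall
  set A : Set (EuclideanSpace ℝ (Fin d)) := (fun v => v + x) ⁻¹' B₀ with hAdef
  have hAmeas : MeasurableSet A := hB₀meas.preimage (measurable_add_const x)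
  -- volume lower bound for B₀
  have hvolB₀ : ENNReal.ofReal (C₂/2 * δ ^ α * (a ^ n : ℝ) ^ ((d:ℝ) - α)) ≤ volume B₀ := by
    have h1 := hlower x δ (a ^ n) (pow_pos ha0 n) (han.trans hδ2δ) hδle1
      (self_subset_cthickening K hxK)
    have han1 : (a:ℝ) ^ (n+1) ≤ a ^ n := pow_le_pow_of_le_one ha0.le ha1.le (Nat.le_succ n)
    have h2 := hupper x δ (a ^ (n+1)) (pow_pos ha0 (n+1)) ((han1.trans han).trans hδ2δ) hδle1
    have hsetEq : B₀ = (cthickening (a^n) K ∩ closedBall x δ)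
        \ (cthickening (a^(n+1)) K ∩ closedBall x δ) := by
      ext y
      simp only [hB₀def, hSdef, Set.mem_inter_iff, Set.mem_diff, Set.mem_inter_iff]
      tauto
    rw [hsetEq]
    refine le_trans (le_trans ?_ (tsub_le_tsub h1 h2)) le_measure_diff
    rw [← ENNReal.ofReal_sub _ (by positivity)]
    apply ENNReal.ofReal_le_ofReal
    have hpow : ((a:ℝ) ^ (n+1)) ^ ((d:ℝ) - α) = a ^ ((d:ℝ)-α) * ((a:ℝ)^n) ^ ((d:ℝ)-α) := by
      rw [pow_succ, mul_comm ((a:ℝ)^n) a, Real.mul_rpow ha0.le (by positivity)]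
    rw [hpow]
    have hδα : (0:ℝ) ≤ δ ^ α := Real.rpow_nonneg hδ.le α
    have hanα : (0:ℝ) ≤ ((a:ℝ)^n) ^ ((d:ℝ)-α) := Real.rpow_nonneg (by positivity) _
    nlinarith [mul_le_mul_of_nonneg_right haC (mul_nonneg hδα hanα)]
  have hvolA : volume A = volume B₀ := measure_preimage_add_right volume x B₀
  have hB₀fin : volume B₀ ≠ ⊤ :=
    ((measure_mono Set.inter_subset_right).trans_lt measure_closedBall_lt_top).ne
  have hAfin : volume A ≠ ⊤ := by rw [hvolA]; exact hB₀fin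
  have hAsub : A ⊆ closedBall (0 : EuclideanSpace ℝ (Fin d)) δ := by
    intro y hy
    have h2 : y + x ∈ closedBall x δ := hy.2
    simp only [mem_closedBall, dist_eq_norm, add_sub_cancel_right] at h2
    simpa [mem_closedBall, dist_eq_norm] using h2
  -- the constant in the per-time-s bound
  set c₁ : ℝ := Real.exp (-(1/2:ℝ)) * (4*Real.pi) ^ (-(d:ℝ)/2) * δ ^ (-(d:ℝ)) with hc₁def
  have hc₁pos : 0 < c₁ := by rw [hc₁def]; positivity
  set c₀ : ℝ := c₁ * (C₂/2 * δ ^ α * ((a:ℝ)^n) ^ ((d:ℝ)-α)) with hc₀def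
  -- per-s lower bound on the hitting probability
  have key : ∀ s : ℝ, s ∈ Set.Ioc (δ^2/2) (δ^2) →
      c₀ ≤ (P {ω | X s ω ∈ S}).toReal := by
    intro s hs
    have hs0 : 0 < s := lt_of_le_of_lt (by positivity) hs.1
    have hincr := hBM.incr 0 s le_rfl hs0 A hAmeas
    rw [sub_zero] at hincr
    -- heat kernel lower bound on A
    have hhk : ∀ y ∈ A, c₁ ≤ heatKernel d s 0 y := by
      intro y hy
      have hyδ : dist (0 : EuclideanSpace ℝ (Fin d)) y ≤ δ := by
        rw [dist_comm]; exact hAsub hy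
      unfold heatKernel
      have h4s : 2 * δ^2 ≤ 4 * s := by nlinarith [hs.1]
      have hA1 : (4*Real.pi*(δ^2)) ^ (-(d:ℝ)/2) ≤ (4*Real.pi*s) ^ (-(d:ℝ)/2) :=
        Real.rpow_le_rpow_of_nonpos (by positivity) (by nlinarith [hs.2, Real.pi_pos]) (by
          have : (0:ℝ) ≤ (d:ℝ) := Nat.cast_nonneg d
          linarith)
      have hA2 : (4*Real.pi*(δ^2)) ^ (-(d:ℝ)/2)
          = (4*Real.pi) ^ (-(d:ℝ)/2) * δ ^ (-(d:ℝ)) := by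
        rw [Real.mul_rpow hπ.le (by positivity)]
        congr 1
        have h2 : (δ:ℝ)^2 = δ ^ ((2:ℕ):ℝ) := (Real.rpow_natCast δ 2).symm
        rw [h2, ← Real.rpow_mul hδ.le]
        congr 1
        push_cast
        ring
      have hexp : Real.exp (-(1/2:ℝ)) ≤ Real.exp (-(dist (0:EuclideanSpace ℝ (Fin d)) y) ^ 2 / (4*s)) := by
        apply Real.exp_le_exp.2
        have hd2 : (dist (0:EuclideanSpace ℝ (Fin d)) y)^2 ≤ δ^2 := by
          nlinarith [dist_nonneg (x := (0:EuclideanSpace ℝ (Fin d))) (y := y)]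
        have h4s' : (0:ℝ) < 4*s := by positivity
        rw [neg_div, neg_le_neg_iff, div_le_iff₀ h4s']
        nlinarith
      calc c₁ = Real.exp (-(1/2:ℝ)) * ((4*Real.pi) ^ (-(d:ℝ)/2) * δ ^ (-(d:ℝ))) := by
              rw [hc₁def]; ring
        _ ≤ Real.exp (-(dist (0:EuclideanSpace ℝ (Fin d)) y) ^ 2 / (4*s))
              * ((4*Real.pi*s) ^ (-(d:ℝ)/2)) := by
              rw [← hA2]
              exact mul_le_mul hexp hA1 (by positivity) (Real.exp_nonneg _)
        _ = (4*Real.pi*s) ^ (-(d:ℝ)/2)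
              * Real.exp (-(dist (0:EuclideanSpace ℝ (Fin d)) y) ^ 2 / (4*s)) := by ring
    -- integrability of heat kernel on A
    have hcont : Continuous (heatKernel d s 0) := by
      unfold heatKernel
      exact continuous_const.mul (Real.continuous_exp.comp (by fun_prop))
    have hint : IntegrableOn (heatKernel d s 0) A volume := by
      refine Integrable.mono' (g := fun _ => (4*Real.pi*s) ^ (-(d:ℝ)/2))
        (integrableOn_const hAfin)
        hcont.aestronglyMeasurable.restrict ?_
      filter_upwards with y
      rw [Real.norm_eq_abs]
      unfold heatKernel
      rw [abs_of_nonneg (by positivity)]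
      have : Real.exp (-(dist (0:EuclideanSpace ℝ (Fin d)) y) ^ 2 / (4*s)) ≤ 1 := by
        apply Real.exp_le_one_iff.2
        have := sq_nonneg (dist (0:EuclideanSpace ℝ (Fin d)) y)
        have h4s : (0:ℝ) < 4 * s := by positivity
        apply div_nonpos_of_nonpos_of_nonneg <;> linarith
      nlinarith [Real.rpow_pos_of_pos (show (0:ℝ) < 4*Real.pi*s by positivity) (-(d:ℝ)/2)]
    have hge := setIntegral_ge_of_const_le hAmeas hAfin hhk hint
    rw [measureReal_def, smul_eq_mul, mul_comm] at hge
    rw [← hincr] at hge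
    -- a.e. identification
    have hPeq : P {ω | X s ω - X 0 ω ∈ A} = P {ω | X s ω ∈ B₀} := by
      apply measure_congr
      rw [Filter.eventuallyEq_set]
      filter_upwards [hBM.start] with ω h0
      simp only [Set.mem_setOf_eq, hAdef, Set.mem_preimage, h0, sub_add_cancel]
    rw [hPeq] at hge
    have hvA : C₂/2 * δ ^ α * ((a:ℝ)^n) ^ ((d:ℝ)-α) ≤ (volume A).toReal := by
      rw [hvolA]
      calc C₂/2 * δ ^ α * ((a:ℝ)^n) ^ ((d:ℝ)-α)
          = (ENNReal.ofReal (C₂/2 * δ ^ α * ((a:ℝ)^n) ^ ((d:ℝ)-α))).toReal := by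
            rw [ENNReal.toReal_ofReal (by positivity)]
        _ ≤ (volume B₀).toReal := ENNReal.toReal_mono hB₀fin hvolB₀
    calc c₀ ≤ c₁ * (volume A).toReal := by
          rw [hc₀def]; exact mul_le_mul_of_nonneg_left hvA hc₁pos.le
      _ ≤ (P {ω | X s ω ∈ B₀}).toReal := hge
      _ ≤ (P {ω | X s ω ∈ S}).toReal :=
          ENNReal.toReal_mono (measure_ne_top P _) (measure_mono (fun ω h => h.1))
  -- measurability / integrability of the occupation integrand
  have hFmeas : Measurable (fun p : Ω × ℝ => Set.indicator S (fun _ => (1:ℝ)) (X p.2 p.1)) :=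
    (measurable_const.indicator hS).comp (hBM.meas.comp measurable_swap)
  have hFint : ∀ (c : ℝ), Integrable (fun p : Ω × ℝ => Set.indicator S (fun _ => (1:ℝ)) (X p.2 p.1))
      (P.prod (volume.restrict (Set.Ioc c (δ^2)))) := by
    intro c
    haveI : IsFiniteMeasure (volume.restrict (Set.Ioc c (δ^2))) :=
      ⟨by rw [Measure.restrict_apply_univ]; exact measure_Ioc_lt_top⟩
    refine Integrable.mono' (integrable_const 1) hFmeas.aestronglyMeasurable ?_
    filter_upwards with p
    rw [Real.norm_eq_abs, abs_of_nonneg (Set.indicator_nonneg (fun _ _ => zero_le_one) _)]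
    exact Set.indicator_apply_le' (fun _ => le_rfl) (fun _ => zero_le_one)
  have hωint : ∀ ω, IntegrableOn (fun s => Set.indicator S (fun _ => (1:ℝ)) (X s ω))
      (Set.Ioc (0:ℝ) (δ^2)) volume := by
    intro ω
    have hm : Measurable fun s => Set.indicator S (fun _ => (1:ℝ)) (X s ω) :=
      (measurable_const.indicator hS).comp (hBM.meas.comp (measurable_id.prodMk measurable_const))
    refine Integrable.mono' (g := fun _ => (1:ℝ))
      (integrableOn_const (C := (1:ℝ)) measure_Ioc_lt_top.ne)
      hm.aestronglyMeasurable.restrict ?_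
    filter_upwards with s
    rw [Real.norm_eq_abs, abs_of_nonneg (Set.indicator_nonneg (fun _ _ => zero_le_one) _)]
    exact Set.indicator_apply_le' (fun _ => le_rfl) (fun _ => zero_le_one)
  -- step 1 : restrict the time interval
  have step1 : ∫ ω, (∫ s in Set.Ioc (δ^2/2) (δ^2), Set.indicator S (fun _ => (1:ℝ)) (X s ω)) ∂P
      ≤ ∫ ω, (∫ s in Set.Ioc (0:ℝ) (δ^2), Set.indicator S (fun _ => (1:ℝ)) (X s ω)) ∂P := by
    refine integral_mono ((hFint (δ^2/2)).integral_prod_left) ((hFint 0).integral_prod_left) ?_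
    intro ω
    refine setIntegral_mono_set (hωint ω) ?_ ?_
    · filter_upwards with s
      exact Set.indicator_nonneg (fun _ _ => zero_le_one) _
    · exact HasSubset.Subset.eventuallyLE (Set.Ioc_subset_Ioc_left (by positivity))
  -- step 2 : Fubini
  have step2 : ∫ ω, (∫ s in Set.Ioc (δ^2/2) (δ^2), Set.indicator S (fun _ => (1:ℝ)) (X s ω)) ∂P
      = ∫ s in Set.Ioc (δ^2/2) (δ^2), (∫ ω, Set.indicator S (fun _ => (1:ℝ)) (X s ω) ∂P) :=
    integral_integral_swap (hFint (δ^2/2))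
  -- step 3 : inner integral is a probability
  have step3 : ∀ s : ℝ, (∫ ω, Set.indicator S (fun _ => (1:ℝ)) (X s ω) ∂P)
      = (P {ω | X s ω ∈ S}).toReal := by
    intro s
    have hXs : Measurable fun ω => X s ω :=
      hBM.meas.comp (measurable_const.prodMk measurable_id)
    have heq : (fun ω => Set.indicator S (fun _ => (1:ℝ)) (X s ω))
        = Set.indicator ((fun ω => X s ω) ⁻¹' S) (fun _ => (1:ℝ)) := by
      funext ω
      by_cases h : X s ω ∈ S
      · rw [Set.indicator_of_mem h,
          Set.indicator_of_mem (show ω ∈ (fun ω => X s ω) ⁻¹' S from h)]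
      · rw [Set.indicator_of_notMem h,
          Set.indicator_of_notMem (show ω ∉ (fun ω => X s ω) ⁻¹' S from h)]
    rw [heq, integral_indicator_const (1:ℝ) (hXs hS), smul_eq_mul, mul_one]
    rfl
  -- step 4 : lower bound the time integral
  have step4 : c₀ * (δ^2/2)
      ≤ ∫ s in Set.Ioc (δ^2/2) (δ^2), (P {ω | X s ω ∈ S}).toReal := by
    have hmeas : Measurable fun s : ℝ => (P {ω | X s ω ∈ S}).toReal := by
      have h := measurable_measure_prodMk_left (ν := P)
        (s := {p : ℝ × Ω | X p.1 p.2 ∈ S}) (hBM.meas hS)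
      exact h.ennreal_toReal
    have hint : IntegrableOn (fun s : ℝ => (P {ω | X s ω ∈ S}).toReal)
        (Set.Ioc (δ^2/2) (δ^2)) volume := by
      refine Integrable.mono' (g := fun _ => (1:ℝ))
        (integrableOn_const measure_Ioc_lt_top.ne)
        hmeas.aestronglyMeasurable.restrict ?_
      filter_upwards with s
      rw [Real.norm_eq_abs, abs_of_nonneg ENNReal.toReal_nonneg]
      calc (P {ω | X s ω ∈ S}).toReal ≤ (P Set.univ).toReal :=
            ENNReal.toReal_mono (measure_ne_top P _) (measure_mono (Set.subset_univ _))
        _ = 1 := by simp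
    have hge := setIntegral_ge_of_const_le measurableSet_Ioc
      (measure_Ioc_lt_top.ne) key hint
    rw [measureReal_def, smul_eq_mul, mul_comm] at hge
    have hvol : (volume (Set.Ioc (δ^2/2) (δ^2))).toReal = δ^2/2 := by
      have he : δ^2 - δ^2/2 = δ^2/2 := by ring
      rw [Real.volume_Ioc, he, ENNReal.toReal_ofReal (by positivity)]
    rwa [hvol] at hge
  -- assemble
  have hfinal : C₂ / 4 * Real.exp (-(1/2 : ℝ)) * (4 * Real.pi) ^ (-(d:ℝ)/2)
      * a ^ ((n:ℝ) * ((d:ℝ) - α)) * δ ^ ((2:ℝ) - (d:ℝ) + α) = c₀ * (δ^2/2) := by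
    have e1 : (a:ℝ) ^ ((n:ℝ) * ((d:ℝ) - α)) = ((a:ℝ)^n) ^ ((d:ℝ)-α) := by
      rw [Real.rpow_mul ha0.le, Real.rpow_natCast]
    have e2 : (δ:ℝ) ^ ((2:ℝ) - (d:ℝ) + α) = δ^2 * δ ^ (-(d:ℝ)) * δ ^ α := by
      rw [show (2:ℝ) - (d:ℝ) + α = 2 + (-(d:ℝ)) + α by ring,
        Real.rpow_add hδ, Real.rpow_add hδ,
        show ((2:ℝ) = ((2:ℕ):ℝ)) by norm_num, Real.rpow_natCast]
    rw [e1, e2, hc₀def, hc₁def]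
    ring
  calc C₂ / 4 * Real.exp (-(1/2 : ℝ)) * (4 * Real.pi) ^ (-(d:ℝ)/2)
        * a ^ ((n:ℝ) * ((d:ℝ) - α)) * δ ^ ((2:ℝ) - (d:ℝ) + α)
      = c₀ * (δ^2/2) := hfinal
    _ ≤ ∫ s in Set.Ioc (δ^2/2) (δ^2), (P {ω | X s ω ∈ S}).toReal := step4
    _ = ∫ ω, (∫ s in Set.Ioc (δ^2/2) (δ^2), Set.indicator S (fun _ => (1:ℝ)) (X s ω)) ∂P := by
        rw [step2]; exact (setIntegral_congr_fun measurableSet_Ioc (fun s _ => (step3 s))).symm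
    _ ≤ _ := step1
end

section
/- Let (X_t) be standard Brownian motion in ℝ^d (d ≥ 2) started at the origin. Then almost surely ∫₀^δ |X_s|^{-2} ds = ∞ for every δ > 0. -/
open MeasureTheory Metric ProbabilityTheory
open scoped ENNReal

/- ### Auxiliary lemmas -/

lemma gauss_integrable (d : ℕ) {b : ℝ} (hb : 0 < b) :
    Integrable (fun v : EuclideanSpace ℝ (Fin d) => Real.exp (-b * ‖v‖^2)) := by
  have h := GaussianFourier.integrable_cexp_neg_mul_sq_norm_add
    (V := EuclideanSpace ℝ (Fin d)) (b := (b:ℂ)) (by simpa using hb) 0 0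
  have h2 := h.norm
  simp only [Complex.norm_exp] at h2
  convert h2 using 2 with v
  simp
  left
  rw [← Complex.ofReal_pow, Complex.ofReal_re]

lemma heatKernel_eq (d : ℕ) (t : ℝ) (y : EuclideanSpace ℝ (Fin d)) :
    heatKernel d t 0 y = (4 * Real.pi * t) ^ (-(d : ℝ) / 2) * Real.exp (-(1/(4*t)) * ‖y‖ ^ 2) := by
  rw [heatKernel, dist_zero_left]
  ring_nf

lemma heatKernel_nonneg (d : ℕ) {t : ℝ} (ht : 0 < t) (y : EuclideanSpace ℝ (Fin d)) :
    0 ≤ heatKernel d t 0 y := by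
  have : (0:ℝ) < 4 * Real.pi * t := by positivity
  exact mul_nonneg (Real.rpow_nonneg this.le _) (Real.exp_nonneg _)

lemma heatKernel_integrable (d : ℕ) {t : ℝ} (ht : 0 < t) :
    Integrable (heatKernel d t 0) := by
  have hb : 0 < 1/(4*t) := by positivity
  have := (gauss_integrable d hb).const_mul ((4 * Real.pi * t) ^ (-(d : ℝ) / 2))
  refine this.congr (Filter.Eventually.of_forall fun y => ?_)
  rw [heatKernel_eq]

lemma heatKernel_continuous (d : ℕ) (t : ℝ) : Continuous (heatKernel d t 0) := by
  unfold heatKernel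
  fun_prop

/-- The second moment of the standard heat kernel at time `1`. -/
noncomputable def gaussC (d : ℕ) : ℝ≥0∞ :=
  ∫⁻ z : EuclideanSpace ℝ (Fin d), ENNReal.ofReal (‖z‖^2 * heatKernel d 1 0 z)

lemma gaussC_lt_top (d : ℕ) : gaussC d < ∞ := by
  have hb : (0:ℝ) < 1/8 := by norm_num
  have hint : Integrable (fun v : EuclideanSpace ℝ (Fin d) =>
      (4 * Real.pi * 1) ^ (-(d : ℝ) / 2) * (8 * Real.exp (-(1/8) * ‖v‖^2))) :=
    ((gauss_integrable d hb).const_mul 8).const_mul _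
  have hpt : ∀ z : EuclideanSpace ℝ (Fin d), ‖z‖^2 * heatKernel d 1 0 z ≤
      (4 * Real.pi * 1) ^ (-(d : ℝ) / 2) * (8 * Real.exp (-(1/8) * ‖z‖^2)) := by
    intro z
    rw [heatKernel_eq]
    set x := ‖z‖^2 with hx
    have hx0 : 0 ≤ x := sq_nonneg _
    have hc : (0:ℝ) ≤ (4 * Real.pi * 1) ^ (-(d : ℝ) / 2) := by positivity
    rw [show ‖z‖^2 * ((4 * Real.pi * 1) ^ (-(d : ℝ) / 2) * Real.exp (-(1/(4*1)) * x))
        = (4 * Real.pi * 1) ^ (-(d : ℝ) / 2) * (x * Real.exp (-(1/4) * x)) by rw [hx]; ring]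
    refine mul_le_mul_of_nonneg_left ?_ hc
    have h1 : x ≤ 8 * Real.exp (x/8) := by
      have := Real.add_one_le_exp (x/8)
      nlinarith
    calc x * Real.exp (-(1/4) * x) ≤ (8 * Real.exp (x/8)) * Real.exp (-(1/4) * x) := by
          exact mul_le_mul_of_nonneg_right h1 (Real.exp_nonneg _)
      _ = 8 * Real.exp (-(1/8) * x) := by
          rw [mul_assoc, ← Real.exp_add]; ring_nf
  calc gaussC d ≤ ∫⁻ z : EuclideanSpace ℝ (Fin d),
        ENNReal.ofReal ((4 * Real.pi * 1) ^ (-(d : ℝ) / 2) * (8 * Real.exp (-(1/8) * ‖z‖^2))) :=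
        lintegral_mono fun z => ENNReal.ofReal_le_ofReal (hpt z)
    _ < ∞ := hint.lintegral_lt_top

lemma lintegral_heat_moment (d : ℕ) {t : ℝ} (ht : 0 < t) :
    ∫⁻ y : EuclideanSpace ℝ (Fin d), ENNReal.ofReal (‖y‖^2 * heatKernel d t 0 y)
      = ENNReal.ofReal t * gaussC d := by
  have hπ : (0:ℝ) < Real.pi := Real.pi_pos
  set r := Real.sqrt t with hr
  have hr0 : 0 < r := Real.sqrt_pos.2 ht
  have hrd : (0:ℝ) < r ^ d := by positivity
  have hg : Measurable fun y : EuclideanSpace ℝ (Fin d) =>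
      ENNReal.ofReal (‖y‖^2 * heatKernel d t 0 y) :=
    (((continuous_norm.pow 2).mul (heatKernel_continuous d t)).measurable).ennreal_ofReal
  have hmap := Measure.map_addHaar_smul (volume : Measure (EuclideanSpace ℝ (Fin d)))
    (r := r) hr0.ne'
  have hsub := lintegral_map (μ := (volume : Measure (EuclideanSpace ℝ (Fin d)))) hg
    (measurable_const_smul (M := ℝ) r)
  rw [hmap, lintegral_smul_measure, finrank_euclideanSpace_fin] at hsub
  have hcancel : ENNReal.ofReal (r ^ d) * ENNReal.ofReal |(r ^ d)⁻¹| = 1 := by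
    rw [abs_of_nonneg (by positivity), ← ENNReal.ofReal_mul hrd.le,
      mul_inv_cancel₀ hrd.ne', ENNReal.ofReal_one]
  have key : ∫⁻ y : EuclideanSpace ℝ (Fin d), ENNReal.ofReal (‖y‖^2 * heatKernel d t 0 y)
      = ENNReal.ofReal (r ^ d) *
        ∫⁻ z : EuclideanSpace ℝ (Fin d), ENNReal.ofReal (‖r • z‖^2 * heatKernel d t 0 (r • z)) := by
    rw [← hsub, smul_eq_mul, ← mul_assoc, hcancel, one_mul]
  rw [key, ← lintegral_const_mul' _ _ ENNReal.ofReal_ne_top]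
  rw [gaussC, ← lintegral_const_mul' _ _ ENNReal.ofReal_ne_top]
  congr 1
  funext z
  rw [← ENNReal.ofReal_mul hrd.le, ← ENNReal.ofReal_mul ht.le]
  congr 1
  have hnrm : ‖r • z‖^2 = t * ‖z‖^2 := by
    rw [norm_smul, Real.norm_eq_abs, abs_of_nonneg hr0.le, mul_pow, Real.sq_sqrt ht.le]
  rw [heatKernel, heatKernel]
  simp only [dist_zero_left]
  rw [hnrm]
  have hexp : Real.exp (-(t * ‖z‖^2) / (4 * t)) = Real.exp (-‖z‖^2 / (4 * 1)) := by
    congr 1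
    field_simp
  rw [hexp]
  have hrd2 : r ^ d = t ^ ((d:ℝ)/2) := by
    rw [hr, Real.sqrt_eq_rpow, ← Real.rpow_natCast (t ^ ((1:ℝ)/2)) d, ← Real.rpow_mul ht.le]
    congr 1; ring
  have hfac : (4 * Real.pi * t) ^ (-(d : ℝ) / 2)
      = (4 * Real.pi) ^ (-(d : ℝ) / 2) * t ^ (-(d : ℝ) / 2) := by
    rw [Real.mul_rpow (by positivity) ht.le]
  have hcl : r ^ d * t ^ (-(d : ℝ) / 2) = 1 := by
    rw [hrd2, ← Real.rpow_add ht, show ((d:ℝ)/2 + -(d:ℝ)/2 : ℝ) = 0 by ring, Real.rpow_zero]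
  rw [hfac]
  calc r ^ d * (t * ‖z‖^2 * ((4 * Real.pi) ^ (-(d : ℝ) / 2) * t ^ (-(d : ℝ) / 2)
        * Real.exp (-‖z‖^2 / (4 * 1))))
      = (r ^ d * t ^ (-(d : ℝ) / 2)) * (t * (‖z‖^2 * ((4 * Real.pi) ^ (-(d : ℝ) / 2)
        * Real.exp (-‖z‖^2 / (4 * 1))))) := by ring
    _ = t * (‖z‖^2 * ((4 * Real.pi * 1) ^ (-(d : ℝ) / 2) * Real.exp (-‖z‖^2 / (4 * 1)))) := by
        rw [hcl, one_mul, mul_one]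
        norm_num

section BM

variable {d : ℕ} {Ω : Type*} [MeasurableSpace Ω] {P : Measure Ω}
    {X : ℝ → Ω → EuclideanSpace ℝ (Fin d)}

lemma meas_X (hBM : IsBrownianMotion P d X 0) (t : ℝ) : Measurable (X t) :=
  hBM.meas.comp (measurable_prodMk_left)

lemma law_eq (hBM : IsBrownianMotion P d X 0) {t : ℝ} (ht : 0 < t) :
    Measure.map (X t) P = volume.withDensity (fun y => ENNReal.ofReal (heatKernel d t 0 y)) := by
  have : IsProbabilityMeasure P := hBM.isProb
  ext A hA
  rw [Measure.map_apply (meas_X hBM t) hA, withDensity_apply _ hA]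
  have h1 : P {ω | X t ω - X 0 ω ∈ A} = P (X t ⁻¹' A) := by
    apply measure_congr
    rw [Filter.eventuallyEq_set]
    filter_upwards [hBM.start] with ω h0
    simp [Set.mem_setOf_eq, Set.mem_preimage, h0]
  have h2 := hBM.incr 0 t le_rfl ht A hA
  rw [sub_zero] at h2
  calc P (X t ⁻¹' A) = ENNReal.ofReal ((P {ω | X t ω - X 0 ω ∈ A}).toReal) := by
        rw [h1, ENNReal.ofReal_toReal (measure_ne_top _ _)]
    _ = ENNReal.ofReal (∫ y in A, heatKernel d t 0 y) := by rw [h2]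
    _ = ∫⁻ y in A, ENNReal.ofReal (heatKernel d t 0 y) :=
        ofReal_integral_eq_lintegral_ofReal ((heatKernel_integrable d ht).integrableOn)
          (Filter.Eventually.of_forall fun y => heatKernel_nonneg d ht y)

lemma moment (hBM : IsBrownianMotion P d X 0) {t : ℝ} (ht : 0 < t) :
    ∫⁻ ω, ((‖X t ω‖₊ : ℝ≥0∞))^2 ∂P = ENNReal.ofReal t * gaussC d := by
  have hF : Measurable fun y : EuclideanSpace ℝ (Fin d) => ((‖y‖₊ : ℝ≥0∞))^2 :=
    measurable_nnnorm.coe_nnreal_ennreal.pow_const 2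
  have hdens : Measurable fun y : EuclideanSpace ℝ (Fin d) =>
      ENNReal.ofReal (heatKernel d t 0 y) :=
    (heatKernel_continuous d t).measurable.ennreal_ofReal
  rw [← lintegral_map hF (meas_X hBM t), law_eq hBM ht,
    lintegral_withDensity_eq_lintegral_mul _ hdens hF, ← lintegral_heat_moment d ht]
  congr 1
  funext y
  rw [ENNReal.ofReal_mul (sq_nonneg _), ENNReal.ofReal_pow (norm_nonneg _),
    ofReal_norm, enorm_eq_nnnorm, Pi.mul_apply, mul_comm]

lemma meas_sq (hBM : IsBrownianMotion P d X 0) :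
    Measurable fun p : ℝ × Ω => ((‖X p.1 p.2‖₊ : ℝ≥0∞))^2 :=
  (hBM.meas.nnnorm.coe_nnreal_ennreal).pow_const 2

lemma meas_Y (hBM : IsBrownianMotion P d X 0) (I : Set ℝ) :
    Measurable fun ω => ∫⁻ s in I, ((‖X s ω‖₊ : ℝ≥0∞))^2 :=
  Measurable.lintegral_prod_right' ((meas_sq hBM).comp measurable_swap)

lemma avg_bound (hBM : IsBrownianMotion P d X 0) {a b : ℝ} (ha : 0 ≤ a) :
    ∫⁻ ω, (∫⁻ s in Set.Ioc a b, ((‖X s ω‖₊ : ℝ≥0∞))^2) ∂P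
      ≤ ENNReal.ofReal b * gaussC d * ENNReal.ofReal (b - a) := by
  have : IsProbabilityMeasure P := hBM.isProb
  have hswap := lintegral_lintegral_swap (μ := P) (ν := volume.restrict (Set.Ioc a b))
    (f := fun ω s => ((‖X s ω‖₊ : ℝ≥0∞))^2)
    (((meas_sq hBM).comp measurable_swap).aemeasurable)
  rw [hswap]
  calc ∫⁻ s in Set.Ioc a b, ∫⁻ ω, ((‖X s ω‖₊ : ℝ≥0∞))^2 ∂P
      ≤ ∫⁻ _s in Set.Ioc a b, ENNReal.ofReal b * gaussC d := by
        apply setLIntegral_mono' measurableSet_Ioc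
        intro s hs
        rw [moment hBM (lt_of_le_of_lt ha hs.1)]
        exact mul_le_mul_left (ENNReal.ofReal_le_ofReal hs.2) _
    _ = ENNReal.ofReal b * gaussC d * ENNReal.ofReal (b - a) := by
        rw [setLIntegral_const, Real.volume_Ioc]

end BM

lemma cs_lemma {g : ℝ → ℝ≥0∞} (hg : Measurable g) (htop : ∀ s, g s ≠ ⊤) {I : Set ℝ}
    (hfin : ∫⁻ s in I, (g s ^ 2)⁻¹ ≠ ⊤) :
    (volume I) ^ 2 ≤ (∫⁻ s in I, (g s ^ 2)⁻¹) * ∫⁻ s in I, g s ^ 2 := by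
  set μ := volume.restrict I with hμ
  have hinv_meas : Measurable fun s => (g s ^ 2)⁻¹ := (hg.pow_const 2).inv
  have hae : ∀ᵐ s ∂μ, (g s ^ 2)⁻¹ < ∞ := ae_lt_top hinv_meas hfin
  have hone : (fun s => ((g s)⁻¹ * g s)) =ᵐ[μ] (fun _ => (1 : ℝ≥0∞)) := by
    filter_upwards [hae] with s hs
    have hg0 : g s ≠ 0 := by
      intro h
      rw [h] at hs
      simp at hs
    exact ENNReal.inv_mul_cancel hg0 (htop s)
  have hvol : ∫⁻ s, (g s)⁻¹ * g s ∂μ = volume I := by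
    rw [lintegral_congr_ae hone, lintegral_one, hμ, Measure.restrict_apply_univ]
  have hcs := ENNReal.lintegral_mul_le_Lp_mul_Lq μ (Real.HolderConjugate.two_two :
    Real.HolderConjugate 2 2) hg.inv.aemeasurable hg.aemeasurable
  simp only [Pi.mul_apply, Pi.inv_apply] at hcs
  rw [hvol] at hcs
  have hrw1 : ∀ s, (g s)⁻¹ ^ (2:ℝ) = (g s ^ 2)⁻¹ := by
    intro s
    rw [ENNReal.inv_rpow, ← ENNReal.rpow_natCast (g s) 2]
    norm_num
  have hrw2 : ∀ s, g s ^ (2:ℝ) = g s ^ 2 := by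
    intro s
    rw [← ENNReal.rpow_natCast (g s) 2]
    norm_num
  simp only [hrw1, hrw2] at hcs
  calc (volume I) ^ 2
      ≤ ((∫⁻ s, (g s ^ 2)⁻¹ ∂μ) ^ ((1:ℝ)/2) * (∫⁻ s, g s ^ 2 ∂μ) ^ ((1:ℝ)/2)) ^ 2 :=
        by rw [pow_two, pow_two]; exact mul_le_mul' hcs hcs
    _ = (∫⁻ s, (g s ^ 2)⁻¹ ∂μ) * ∫⁻ s, g s ^ 2 ∂μ := by
        rw [mul_pow, ← ENNReal.rpow_natCast ((∫⁻ s, (g s ^ 2)⁻¹ ∂μ) ^ ((1:ℝ)/2)) 2,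
          ← ENNReal.rpow_natCast ((∫⁻ s, g s ^ 2 ∂μ) ^ ((1:ℝ)/2)) 2,
          ← ENNReal.rpow_mul, ← ENNReal.rpow_mul]
        norm_num

/-- For standard Brownian motion in `ℝ^d`, `d ≥ 2`, started at the origin, almost surely
`∫₀^δ |X_s|⁻² ds = ∞` for every `δ > 0`. -/
theorem inverse_square_integral_diverges
    (d : ℕ) (hd : 2 ≤ d) {Ω : Type*} [MeasurableSpace Ω] (P : Measure Ω)
    (X : ℝ → Ω → EuclideanSpace ℝ (Fin d))
    (hBM : IsBrownianMotion P d X 0) :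
    ∀ᵐ ω ∂P, ∀ δ : ℝ, 0 < δ →
      ∫⁻ s in Set.Ioc (0 : ℝ) δ, ((‖X s ω‖₊ : ℝ≥0∞) ^ 2)⁻¹ = ⊤ := by
  classical
  have hprob : IsProbabilityMeasure P := hBM.isProb
  have hCtop : gaussC d ≠ ⊤ := (gaussC_lt_top d).ne
  set c : ℕ → ℝ := fun n => (2:ℝ)⁻¹ ^ n with hc
  have hcpos : ∀ n, 0 < c n := fun n => pow_pos (by norm_num) n
  have hcsucc : ∀ n, c (n+1) = c n * 2⁻¹ := fun n => pow_succ _ _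
  have hcant : ∀ m n : ℕ, m ≤ n → c n ≤ c m := fun m n h =>
    pow_le_pow_of_le_one (by norm_num) (by norm_num) h
  set Y : ℕ → Ω → ℝ≥0∞ :=
    fun n ω => ∫⁻ s in Set.Ioc (c (n+1)) (c n), ((‖X s ω‖₊ : ℝ≥0∞))^2 with hY
  set G : ℕ → ℕ → Set Ω :=
    fun n k => {ω | (k:ℝ≥0∞) * ENNReal.ofReal ((c n)^2) ≤ Y n ω} with hG
  -- Markov bound
  have hmarkov : ∀ n k : ℕ, k ≠ 0 → P (G n k) ≤ gaussC d / k := by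
    intro n k hk
    have hr0 : ENNReal.ofReal ((c n)^2) ≠ 0 :=
      (ENNReal.ofReal_pos.2 (by positivity)).ne'
    have hrtop : ENNReal.ofReal ((c n)^2) ≠ ⊤ := ENNReal.ofReal_ne_top
    have h1 := mul_meas_ge_le_lintegral₀ (μ := P)
      ((meas_Y hBM (Set.Ioc (c (n+1)) (c n))).aemeasurable)
      ((k:ℝ≥0∞) * ENNReal.ofReal ((c n)^2))
    have h2 : ∫⁻ ω, Y n ω ∂P ≤ gaussC d * ENNReal.ofReal ((c n)^2) := by
      refine (avg_bound hBM (hcpos (n+1)).le).trans ?_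
      have hle : c n - c (n+1) ≤ c n := sub_le_self _ (hcpos _).le
      calc ENNReal.ofReal (c n) * gaussC d * ENNReal.ofReal (c n - c (n+1))
          ≤ ENNReal.ofReal (c n) * gaussC d * ENNReal.ofReal (c n) :=
            mul_le_mul_right (ENNReal.ofReal_le_ofReal hle) _
        _ = gaussC d * ENNReal.ofReal ((c n)^2) := by
            rw [sq, ENNReal.ofReal_mul (hcpos n).le]; ring
    rw [ENNReal.le_div_iff_mul_le (Or.inl (Nat.cast_ne_zero.2 hk))
      (Or.inl (ENNReal.natCast_ne_top k))]
    rw [← ENNReal.mul_le_mul_iff_left hr0 hrtop]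
    calc P (G n k) * k * ENNReal.ofReal ((c n)^2)
        = ((k:ℝ≥0∞) * ENNReal.ofReal ((c n)^2)) * P (G n k) := by ring
      _ ≤ ∫⁻ ω, Y n ω ∂P := h1
      _ ≤ gaussC d * ENNReal.ofReal ((c n)^2) := h2
  -- per-scale bad events are null
  have hbadm : ∀ m : ℕ,
      P {ω | ∫⁻ s in Set.Ioc (0:ℝ) (c m), ((‖X s ω‖₊ : ℝ≥0∞) ^ 2)⁻¹ ≠ ⊤} = 0 := by
    intro m
    set Bad := {ω | ∫⁻ s in Set.Ioc (0:ℝ) (c m), ((‖X s ω‖₊ : ℝ≥0∞) ^ 2)⁻¹ ≠ ⊤} with hBad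
    have hsub : ∀ k : ℕ, k ≠ 0 →
        Bad ⊆ ⋃ N : ℕ, ⋂ (n : ℕ) (_ : N ≤ n), G n k := by
      intro k hk
      intro ω hω
      set T : ℕ → ℝ≥0∞ :=
        fun n => ∫⁻ s in Set.Ioc (c (n+m+1)) (c (n+m)), ((‖X s ω‖₊ : ℝ≥0∞) ^ 2)⁻¹ with hT
      have hgmeas : Measurable fun s : ℝ => ((‖X s ω‖₊ : ℝ≥0∞)) :=
        ((hBM.meas.comp (measurable_id.prodMk measurable_const)).nnnorm).coe_nnreal_ennreal
      have hdisj : Pairwise (Function.onFun Disjoint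
          fun n : ℕ => Set.Ioc (c (n+m+1)) (c (n+m))) := by
        intro i j hij
        rw [Function.onFun, Set.Ioc_disjoint_Ioc]
        rcases hij.lt_or_gt with h | h
        · exact le_trans (min_le_right _ _) (le_trans (hcant _ _ (by omega)) (le_max_left _ _))
        · exact le_trans (min_le_left _ _) (le_trans (hcant _ _ (by omega)) (le_max_right _ _))
      have hsum : ∑' n, T n ≠ ⊤ := by
        rw [hT, ← lintegral_iUnion (fun n => measurableSet_Ioc) hdisj]
        refine ne_top_of_le_ne_top hω (lintegral_mono_set ?_)
        exact Set.iUnion_subset fun n =>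
          Set.Ioc_subset_Ioc (hcpos _).le (hcant _ _ (by omega))
      have hT0 : Filter.Tendsto T Filter.atTop (nhds 0) :=
        ENNReal.tendsto_atTop_zero_of_tsum_ne_top hsum
      have hepos : (0:ℝ≥0∞) < ((4:ℝ≥0∞) * k)⁻¹ :=
        ENNReal.inv_pos.2 (ENNReal.mul_ne_top (by norm_num) (ENNReal.natCast_ne_top k))
      have hev : ∀ᶠ n in Filter.atTop, T n < ((4:ℝ≥0∞) * k)⁻¹ :=
        hT0.eventually_lt_const hepos
      obtain ⟨N, hN⟩ := Filter.eventually_atTop.1 hev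
      refine Set.mem_iUnion.2 ⟨N + m, Set.mem_iInter.2 fun j => Set.mem_iInter.2 fun hj => ?_⟩
      obtain ⟨n, rfl⟩ : ∃ n, j = n + m := ⟨j - m, by omega⟩
      have hTn := hN n (by omega)
      by_contra hnot
      have hYlt : Y (n+m) ω < (k:ℝ≥0∞) * ENNReal.ofReal ((c (n+m))^2) := not_le.1 hnot
      have hfin : T n ≠ ⊤ := (hTn.trans_le le_top).ne
      have hcs := cs_lemma hgmeas (fun s => ENNReal.coe_ne_top) hfin
      rw [Real.volume_Ioc] at hcs
      have hdiff : c (n+m) - c (n+m+1) = c (n+m+1) := by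
        have := hcsucc (n+m); linarith
      rw [hdiff] at hcs
      -- hcs : ofReal (c (n+m+1)) ^ 2 ≤ T n * Y (n+m) ω
      have hr0 : ENNReal.ofReal ((c (n+m))^2) ≠ 0 :=
        (ENNReal.ofReal_pos.2 (by positivity)).ne'
      have hkr0 : (k:ℝ≥0∞) * ENNReal.ofReal ((c (n+m))^2) ≠ 0 :=
        mul_ne_zero (Nat.cast_ne_zero.2 hk) hr0
      have hkrtop : (k:ℝ≥0∞) * ENNReal.ofReal ((c (n+m))^2) ≠ ⊤ :=
        ENNReal.mul_ne_top (ENNReal.natCast_ne_top k) ENNReal.ofReal_ne_top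
      have heq1 : ENNReal.ofReal (c (n+m+1)) ^ 2
          = (4:ℝ≥0∞)⁻¹ * ENNReal.ofReal ((c (n+m))^2) := by
        rw [← ENNReal.ofReal_pow (hcpos _).le]
        have h4 : (c (n+m+1))^2 = 4⁻¹ * (c (n+m))^2 := by
          rw [hcsucc (n+m)]; ring
        rw [h4, ENNReal.ofReal_mul (by norm_num)]
        congr 1
        rw [ENNReal.ofReal_inv_of_pos (by norm_num)]
        norm_num
      have heq2 : ((4:ℝ≥0∞) * k)⁻¹ * ((k:ℝ≥0∞) * ENNReal.ofReal ((c (n+m))^2))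
          = (4:ℝ≥0∞)⁻¹ * ENNReal.ofReal ((c (n+m))^2) := by
        rw [ENNReal.mul_inv (Or.inl (by norm_num)) (Or.inl (by norm_num))]
        rw [mul_assoc, ← mul_assoc ((k:ℝ≥0∞))⁻¹, ENNReal.inv_mul_cancel
          (Nat.cast_ne_zero.2 hk) (ENNReal.natCast_ne_top k), one_mul]
      have hlt : T n * Y (n+m) ω < (4:ℝ≥0∞)⁻¹ * ENNReal.ofReal ((c (n+m))^2) := by
        calc T n * Y (n+m) ω
            ≤ T n * ((k:ℝ≥0∞) * ENNReal.ofReal ((c (n+m))^2)) :=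
              mul_le_mul_right hYlt.le _
          _ < ((4:ℝ≥0∞) * k)⁻¹ * ((k:ℝ≥0∞) * ENNReal.ofReal ((c (n+m))^2)) :=
              (ENNReal.mul_lt_mul_iff_left hkr0 hkrtop).2 hTn
          _ = (4:ℝ≥0∞)⁻¹ * ENNReal.ofReal ((c (n+m))^2) := heq2
      rw [heq1] at hcs
      exact absurd (hcs.trans_lt hlt) (lt_irrefl _)
    have hbound : ∀ k : ℕ, k ≠ 0 → P Bad ≤ gaussC d / k := by
      intro k hk
      refine (measure_mono (hsub k hk)).trans ?_
      have hmono : Monotone fun N : ℕ => ⋂ (n : ℕ) (_ : N ≤ n), G n k := by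
        intro N M hNM
        exact Set.iInter₂_mono' fun n hn => ⟨n, by omega, le_rfl⟩
      rw [hmono.measure_iUnion]
      refine iSup_le fun N => ?_
      refine (measure_mono ?_).trans (hmarkov N k hk)
      exact Set.iInter_subset_of_subset N (Set.iInter_subset _ le_rfl)
    by_contra h0
    have hfin : gaussC d / P Bad ≠ ⊤ := (ENNReal.div_lt_top hCtop h0).ne
    obtain ⟨k, hkgt⟩ := ENNReal.exists_nat_gt hfin
    have hk0 : k ≠ 0 := by
      rintro rfl
      simp at hkgt
    have h1 : gaussC d < (k:ℝ≥0∞) * P Bad :=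
      (ENNReal.div_lt_iff (Or.inl h0) (Or.inr hCtop)).1 hkgt
    have h2 : gaussC d / k < P Bad := by
      rw [ENNReal.div_lt_iff (Or.inl (Nat.cast_ne_zero.2 hk0))
        (Or.inl (ENNReal.natCast_ne_top k))]
      rw [mul_comm]
      exact h1
    exact absurd (hbound k hk0) (not_le.2 h2)
  refine ae_iff.2 (measure_mono_null ?_ (measure_iUnion_null fun m => hbadm m))
  intro ω hω
  simp only [Set.mem_setOf_eq] at hω
  push_neg at hω
  obtain ⟨δ, hδ, hne⟩ := hω
  obtain ⟨m, hm⟩ := exists_pow_lt_of_lt_one hδ (by norm_num : (2:ℝ)⁻¹ < 1)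
  refine Set.mem_iUnion.2 ⟨m, ?_⟩
  simp only [Set.mem_setOf_eq]
  exact ne_top_of_le_ne_top hne (lintegral_mono_set (Set.Ioc_subset_Ioc le_rfl hm.le))
end

section
/- Let V ∈ L¹_loc(ℝ^d) be a nonnegative potential, t > 0, and x, y ∈ ℝ^d with V*Γ_t(x) + V*Γ_t(y) < ∞, where Γ_t(z) = ∫₀^t (4πs)^{-d/2} exp(−|z|²/(4s)) ds. Then the Feynman–Kac kernel satisfies p_t^V(x,y) ≥ (1/2)·e^{−A}·p_t(x,y) > 0 for a suitable finite constant A = A(x,y,t,V); in particular p_t^V(x,y) > 0. -/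
open MeasureTheory Metric
open scoped ENNReal

/-- `Γ_t(x,z) = ∫₀^t p_s(x,z) ds`, the time-truncated Green function. -/
noncomputable def GammaKer (d : ℕ) (t : ℝ) (x z : EuclideanSpace ℝ (Fin d)) : ℝ :=
  ∫ s in Set.Ioc (0 : ℝ) t, heatKernel d s x z

/-- `exp(−y)` for an extended nonnegative real `y`, with the convention `exp(−∞) = 0`. -/
noncomputable def expNeg (y : ℝ≥0∞) : ℝ≥0∞ :=
  if y = ⊤ then 0 else ENNReal.ofReal (Real.exp (-(y.toReal)))

section Aux

variable {d : ℕ}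

lemma heatKernel_pos {s : ℝ} (hs : 0 < s) (a b : EuclideanSpace ℝ (Fin d)) :
    0 < heatKernel d s a b :=
  mul_pos (Real.rpow_pos_of_pos (by positivity) _) (Real.exp_pos _)

lemma heatKernel_symm (s : ℝ) (a b : EuclideanSpace ℝ (Fin d)) :
    heatKernel d s a b = heatKernel d s b a := by
  simp [heatKernel, dist_comm]

lemma heatKernel_le {s : ℝ} (hs : 0 < s) (a b : EuclideanSpace ℝ (Fin d)) :
    heatKernel d s a b ≤ (4 * Real.pi * s) ^ (-(d : ℝ) / 2) := by
  have h0 : (0:ℝ) ≤ (4 * Real.pi * s) ^ (-(d : ℝ) / 2) :=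
    (Real.rpow_pos_of_pos (by positivity) _).le
  have h1 : Real.exp (-(dist a b) ^ 2 / (4 * s)) ≤ 1 := by
    rw [Real.exp_le_one_iff]
    apply div_nonpos_of_nonpos_of_nonneg
    · simpa using sq_nonneg (dist a b)
    · linarith
  calc heatKernel d s a b
      ≤ (4 * Real.pi * s) ^ (-(d : ℝ) / 2) * 1 := mul_le_mul_of_nonneg_left h1 h0
    _ = _ := mul_one _

lemma rpow_decay {t s : ℝ} (ht : 0 < t) (hs : t / 2 ≤ s) :
    (4 * Real.pi * s) ^ (-(d : ℝ) / 2) ≤ (2 * Real.pi * t) ^ (-(d : ℝ) / 2) := by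
  apply Real.rpow_le_rpow_of_nonpos (by positivity)
  · nlinarith [Real.pi_pos]
  · have : (0:ℝ) ≤ (d:ℝ) := Nat.cast_nonneg d
    linarith

lemma heat_prod_le {t s : ℝ} (ht : 0 < t) (hs0 : 0 < s) (hst : s < t)
    (x y z : EuclideanSpace ℝ (Fin d)) :
    heatKernel d s x z * heatKernel d (t - s) z y ≤
      (2 * Real.pi * t) ^ (-(d : ℝ) / 2) *
        (heatKernel d s x z + heatKernel d (t - s) y z) := by
  have hts : 0 < t - s := by linarith
  have hC : (0:ℝ) ≤ (2 * Real.pi * t) ^ (-(d : ℝ) / 2) :=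
    (Real.rpow_pos_of_pos (by positivity) _).le
  have ha : 0 ≤ heatKernel d s x z := (heatKernel_pos hs0 _ _).le
  have hb : 0 ≤ heatKernel d (t - s) y z := (heatKernel_pos hts _ _).le
  rcases le_or_gt s (t / 2) with h | h
  · have h1 : heatKernel d (t - s) z y ≤ (2 * Real.pi * t) ^ (-(d : ℝ) / 2) :=
      (heatKernel_le hts _ _).trans (rpow_decay ht (by linarith))
    calc heatKernel d s x z * heatKernel d (t - s) z y
        ≤ heatKernel d s x z * ((2 * Real.pi * t) ^ (-(d : ℝ) / 2)) :=
          mul_le_mul_of_nonneg_left h1 ha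
      _ ≤ _ := by nlinarith
  · have h1 : heatKernel d s x z ≤ (2 * Real.pi * t) ^ (-(d : ℝ) / 2) :=
      (heatKernel_le hs0 _ _).trans (rpow_decay ht h.le)
    have hb' : 0 ≤ heatKernel d (t - s) z y := (heatKernel_pos hts _ _).le
    calc heatKernel d s x z * heatKernel d (t - s) z y
        ≤ (2 * Real.pi * t) ^ (-(d : ℝ) / 2) * heatKernel d (t - s) z y :=
          mul_le_mul_of_nonneg_right h1 hb'
      _ = (2 * Real.pi * t) ^ (-(d : ℝ) / 2) * heatKernel d (t - s) y z := by
          rw [heatKernel_symm]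
      _ ≤ _ := by nlinarith

lemma measurable_heat (d : ℕ) (x : EuclideanSpace ℝ (Fin d)) :
    Measurable fun q : ℝ × EuclideanSpace ℝ (Fin d) => heatKernel d q.1 x q.2 := by
  simp only [heatKernel]
  apply Measurable.mul
  · have h : Measurable fun u : ℝ => u ^ (-(d:ℝ)/2) := by measurability
    exact h.comp (measurable_const.mul measurable_fst)
  · apply Real.measurable_exp.comp
    apply Measurable.div
    · apply Measurable.neg
      apply Measurable.pow _ measurable_const
      exact (continuous_const.dist continuous_snd).measurable
    · exact measurable_const.mul measurable_fst

lemma measurable_heat_s (d : ℕ) (x z : EuclideanSpace ℝ (Fin d)) :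
    Measurable fun s : ℝ => heatKernel d s x z :=
  (measurable_heat d x).comp (measurable_id.prodMk measurable_const)

lemma measurable_heat_z (d : ℕ) (s : ℝ) (x : EuclideanSpace ℝ (Fin d)) :
    Measurable fun z => heatKernel d s x z :=
  (measurable_heat d x).comp (measurable_const.prodMk measurable_id)

lemma integrableOn_heat {t : ℝ} (ht : 0 < t) {x z : EuclideanSpace ℝ (Fin d)}
    (hz : z ≠ x) :
    IntegrableOn (fun s => heatKernel d s x z) (Set.Ioc 0 t) := by
  have hdxz : 0 < dist x z := dist_pos.mpr (fun h => hz h.symm)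
  set c : ℝ := dist x z ^ 2 / 4 with hcdef
  have hc : 0 < c := by positivity
  clear_value c
  set A : ℝ := (4 * Real.pi) ^ (-(d : ℝ) / 2) with hA
  have hA0 : 0 < A := Real.rpow_pos_of_pos (by positivity) _
  set K : ℝ := A * ((d.factorial : ℝ) * (1 / c) ^ d) * t ^ ((d : ℝ) / 2) with hK
  apply Measure.integrableOn_of_bounded (M := K) measure_Ioc_lt_top.ne
    (measurable_heat_s d x z).aestronglyMeasurable
  rw [ae_restrict_iff' measurableSet_Ioc]
  apply ae_of_all
  intro s hs
  have hs0 : 0 < s := hs.1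
  have hst : s ≤ t := hs.2
  have e1 : heatKernel d s x z = A * s ^ (-(d:ℝ)/2) * Real.exp (-(c / s)) := by
    simp only [heatKernel, hA]
    rw [Real.mul_rpow (by positivity) hs0.le]
    congr 1
    rw [hcdef]
    field_simp
  have e2 : Real.exp (-(c / s)) ≤ (d.factorial : ℝ) * s ^ d / c ^ d := by
    rw [Real.exp_neg]
    have hpow : (c / s) ^ d / (d.factorial : ℝ) ≤ Real.exp (c / s) :=
      Real.pow_div_factorial_le_exp (x := c / s) (by positivity) d
    have h1 : 0 < (c / s) ^ d / (d.factorial : ℝ) := by positivity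
    calc (Real.exp (c / s))⁻¹ ≤ ((c / s) ^ d / (d.factorial : ℝ))⁻¹ := by
          apply inv_anti₀ h1 hpow
      _ = (d.factorial : ℝ) * s ^ d / c ^ d := by
          rw [div_pow]
          field_simp
  have e3 : s ^ (-(d:ℝ)/2) * (s : ℝ) ^ (d : ℕ) = s ^ ((d:ℝ)/2) := by
    rw [← Real.rpow_natCast s d, ← Real.rpow_add hs0]
    congr 1
    ring
  have hnorm : ‖heatKernel d s x z‖ = heatKernel d s x z :=
    Real.norm_of_nonneg (heatKernel_pos hs0 _ _).le
  rw [hnorm, e1]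
  have hs2 : (0:ℝ) < s ^ (-(d:ℝ)/2) := Real.rpow_pos_of_pos hs0 _
  calc A * s ^ (-(d:ℝ)/2) * Real.exp (-(c / s))
      ≤ A * s ^ (-(d:ℝ)/2) * ((d.factorial : ℝ) * s ^ d / c ^ d) := by
        apply mul_le_mul_of_nonneg_left e2 (by positivity)
    _ = A * ((d.factorial : ℝ) * (1 / c) ^ d) * (s ^ (-(d:ℝ)/2) * s ^ d) := by
        rw [div_pow, one_pow]
        field_simp
    _ = A * ((d.factorial : ℝ) * (1 / c) ^ d) * s ^ ((d:ℝ)/2) := by rw [e3]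
    _ ≤ K := by
        rw [hK]
        apply mul_le_mul_of_nonneg_left _ (by positivity)
        exact Real.rpow_le_rpow hs0.le hst (by positivity)

lemma lint_heat_eq {t : ℝ} (ht : 0 < t) {x z : EuclideanSpace ℝ (Fin d)}
    (hz : z ≠ x) :
    ∫⁻ s in Set.Ioc (0:ℝ) t, ENNReal.ofReal (heatKernel d s x z)
      = ENNReal.ofReal (GammaKer d t x z) := by
  rw [GammaKer, ← ofReal_integral_eq_lintegral_ofReal (integrableOn_heat ht hz)]
  filter_upwards [ae_restrict_mem measurableSet_Ioc] with s hs
  exact (heatKernel_pos hs.1 _ _).le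

end Aux

/-- **Positivity of the Feynman–Kac kernel.** If `V ≥ 0` is locally integrable and
`V*Γ_t(x) + V*Γ_t(y) < ∞`, then the Feynman–Kac kernel, represented by the Brownian
bridge measure `μ` from `x` to `y` in time `t` (with total mass `p_t(x,y)` and the usual
one-dimensional marginals), satisfies `p_t^V(x,y) ≥ (1/2) e^{−A} p_t(x,y) > 0` for a
suitable finite constant `A`. -/
theorem feynman_kac_kernel_positive
    (d : ℕ) (hd : 1 ≤ d) (t : ℝ) (ht : 0 < t)
    (x y : EuclideanSpace ℝ (Fin d))
    (V : EuclideanSpace ℝ (Fin d) → ℝ) (hVmeas : Measurable V) (hVpos : ∀ z, 0 ≤ V z)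
    (hVloc : LocallyIntegrable V volume)
    (hconv : (∫⁻ z, ENNReal.ofReal (V z) * ENNReal.ofReal (GammaKer d t x z)) +
        (∫⁻ z, ENNReal.ofReal (V z) * ENNReal.ofReal (GammaKer d t y z)) < ⊤)
    {Ω : Type*} [MeasurableSpace Ω] (μ : Measure Ω) [IsFiniteMeasure μ]
    (e : ℝ → Ω → EuclideanSpace ℝ (Fin d))
    (hemeas : Measurable fun p : ℝ × Ω => e p.1 p.2)
    (hmass : μ Set.univ = ENNReal.ofReal (heatKernel d t x y))
    (hmarg : ∀ s : ℝ, 0 < s → s < t →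
      ∀ A : Set (EuclideanSpace ℝ (Fin d)), MeasurableSet A →
        μ {ω | e s ω ∈ A}
          = ∫⁻ z in A, ENNReal.ofReal (heatKernel d s x z * heatKernel d (t - s) z y)) :
    ∃ A : ℝ,
      ENNReal.ofReal ((1 / 2) * Real.exp (-A) * heatKernel d t x y)
          ≤ ∫⁻ ω, expNeg (∫⁻ s in Set.Ioc (0 : ℝ) t, ENNReal.ofReal (V (e s ω))) ∂μ ∧
      0 < ∫⁻ ω, expNeg (∫⁻ s in Set.Ioc (0 : ℝ) t, ENNReal.ofReal (V (e s ω))) ∂μ := by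
  classical
  set p : ℝ := heatKernel d t x y with hpdef
  have hp : 0 < p := heatKernel_pos ht x y
  set F : Ω → ℝ≥0∞ := fun ω => ∫⁻ s in Set.Ioc (0:ℝ) t, ENNReal.ofReal (V (e s ω))
    with hFdef
  have hFmeas : Measurable F := by
    have h0 : Measurable fun q : Ω × ℝ => ENNReal.ofReal (V (e q.2 q.1)) :=
      (hVmeas.comp (hemeas.comp measurable_swap)).ennreal_ofReal
    exact h0.lintegral_prod_right'
  -- nontriviality / no atoms
  haveI : Nonempty (Fin d) := ⟨⟨0, hd⟩⟩
  haveI : Nontrivial (EuclideanSpace ℝ (Fin d)) := by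
    refine ⟨0, EuclideanSpace.single ⟨0, hd⟩ (1:ℝ), fun h => ?_⟩
    have := congrArg (fun v : EuclideanSpace ℝ (Fin d) => v ⟨0, hd⟩) h
    simp [EuclideanSpace.single] at this
  have ae_ne : ∀ w : EuclideanSpace ℝ (Fin d), ∀ᵐ z : EuclideanSpace ℝ (Fin d), z ≠ w := by
    intro w
    rw [ae_iff]
    simpa using measure_singleton (μ := (volume : Measure (EuclideanSpace ℝ (Fin d)))) w
  -- key: a.e. identification of the time-integrated kernel with GammaKer
  have key : ∀ w : EuclideanSpace ℝ (Fin d),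
      (∫⁻ z, ENNReal.ofReal (V z) *
          ∫⁻ s in Set.Ioc (0:ℝ) t, ENNReal.ofReal (heatKernel d s w z))
        = ∫⁻ z, ENNReal.ofReal (V z) * ENNReal.ofReal (GammaKer d t w z) := by
    intro w
    apply lintegral_congr_ae
    filter_upwards [ae_ne w] with z hz
    rw [lint_heat_eq ht hz]
  set C : ℝ≥0∞ := ENNReal.ofReal ((2 * Real.pi * t) ^ (-(d : ℝ) / 2)) with hCdef
  -- the s-z swap
  have swap1 : ∀ w : EuclideanSpace ℝ (Fin d),
      (∫⁻ s in Set.Ioo (0:ℝ) t, ∫⁻ z, ENNReal.ofReal (V z) *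
          ENNReal.ofReal (heatKernel d s w z))
        = ∫⁻ z, ENNReal.ofReal (V z) *
            ∫⁻ s in Set.Ioo (0:ℝ) t, ENNReal.ofReal (heatKernel d s w z) := by
    intro w
    rw [lintegral_lintegral_swap]
    · apply lintegral_congr
      intro z
      exact lintegral_const_mul _ ((measurable_heat_s d w z).ennreal_ofReal)
    · apply Measurable.aemeasurable
      exact ((hVmeas.comp measurable_snd).ennreal_ofReal).mul
        ((measurable_heat d w).ennreal_ofReal)
  -- finiteness of the expected action
  have hE : (∫⁻ ω, F ω ∂μ) ≠ ⊤ := by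
    have hswap : (∫⁻ ω, F ω ∂μ)
        = ∫⁻ s in Set.Ioc (0:ℝ) t, ∫⁻ ω, ENNReal.ofReal (V (e s ω)) ∂μ := by
      simp only [hFdef]
      rw [lintegral_lintegral_swap]
      apply Measurable.aemeasurable
      exact (hVmeas.comp (hemeas.comp measurable_swap)).ennreal_ofReal
    have hIoo : (∫⁻ s in Set.Ioc (0:ℝ) t, ∫⁻ ω, ENNReal.ofReal (V (e s ω)) ∂μ)
        = ∫⁻ s in Set.Ioo (0:ℝ) t, ∫⁻ ω, ENNReal.ofReal (V (e s ω)) ∂μ :=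
      (setLIntegral_congr (Ioo_ae_eq_Ioc (μ := volume) (a := (0:ℝ)) (b := t))).symm
    -- marginal identification for s ∈ Ioo
    have hmargf : ∀ s ∈ Set.Ioo (0:ℝ) t,
        (∫⁻ ω, ENNReal.ofReal (V (e s ω)) ∂μ)
          = ∫⁻ z, ENNReal.ofReal (heatKernel d s x z * heatKernel d (t - s) z y) *
              ENNReal.ofReal (V z) := by
      intro s hs
      have hes : Measurable (e s) :=
        hemeas.comp (measurable_const.prodMk measurable_id)
      have hdens : Measurable fun z =>
          ENNReal.ofReal (heatKernel d s x z * heatKernel d (t - s) z y) := by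
        apply Measurable.ennreal_ofReal
        apply (measurable_heat_z d s x).mul
        have h2 : (fun z => heatKernel d (t - s) z y)
            = fun z : EuclideanSpace ℝ (Fin d) => heatKernel d (t - s) y z :=
          funext fun z => heatKernel_symm _ _ _
        rw [h2]
        exact measurable_heat_z d (t - s) y
      have hmap : μ.map (e s) = (volume : Measure (EuclideanSpace ℝ (Fin d))).withDensity
          (fun z => ENNReal.ofReal (heatKernel d s x z * heatKernel d (t - s) z y)) := by
        ext A hA
        rw [Measure.map_apply hes hA, withDensity_apply _ hA]
        exact hmarg s hs.1 hs.2 A hA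
      calc (∫⁻ ω, ENNReal.ofReal (V (e s ω)) ∂μ)
          = ∫⁻ z, ENNReal.ofReal (V z) ∂(μ.map (e s)) :=
            (lintegral_map hVmeas.ennreal_ofReal hes).symm
        _ = _ := by
            rw [hmap, lintegral_withDensity_eq_lintegral_mul _ hdens hVmeas.ennreal_ofReal]
            rfl
    -- pointwise bound for s ∈ Ioo
    have hbound : ∀ s ∈ Set.Ioo (0:ℝ) t,
        (∫⁻ z, ENNReal.ofReal (heatKernel d s x z * heatKernel d (t - s) z y) *
            ENNReal.ofReal (V z))
          ≤ C * ((∫⁻ z, ENNReal.ofReal (V z) * ENNReal.ofReal (heatKernel d s x z)) +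
              ∫⁻ z, ENNReal.ofReal (V z) * ENNReal.ofReal (heatKernel d (t - s) y z)) := by
      intro s hs
      have hpt : ∀ z, ENNReal.ofReal (heatKernel d s x z * heatKernel d (t - s) z y) *
            ENNReal.ofReal (V z)
          ≤ C * (ENNReal.ofReal (V z) * ENNReal.ofReal (heatKernel d s x z) +
              ENNReal.ofReal (V z) * ENNReal.ofReal (heatKernel d (t - s) y z)) := by
        intro z
        have hts : 0 < t - s := by linarith [hs.2]
        have h1 : ENNReal.ofReal (heatKernel d s x z * heatKernel d (t - s) z y)
            ≤ C * (ENNReal.ofReal (heatKernel d s x z) +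
                ENNReal.ofReal (heatKernel d (t - s) y z)) := by
          rw [hCdef, ← ENNReal.ofReal_add (heatKernel_pos hs.1 _ _).le
              (heatKernel_pos hts _ _).le,
            ← ENNReal.ofReal_mul (Real.rpow_pos_of_pos (by positivity) _).le]
          exact ENNReal.ofReal_le_ofReal (heat_prod_le ht hs.1 hs.2 x y z)
        calc ENNReal.ofReal (heatKernel d s x z * heatKernel d (t - s) z y) *
              ENNReal.ofReal (V z)
            ≤ (C * (ENNReal.ofReal (heatKernel d s x z) +
                ENNReal.ofReal (heatKernel d (t - s) y z))) * ENNReal.ofReal (V z) :=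
              mul_le_mul_left h1 _
          _ = C * (ENNReal.ofReal (V z) * ENNReal.ofReal (heatKernel d s x z) +
              ENNReal.ofReal (V z) * ENNReal.ofReal (heatKernel d (t - s) y z)) := by
              ring
      calc (∫⁻ z, ENNReal.ofReal (heatKernel d s x z * heatKernel d (t - s) z y) *
              ENNReal.ofReal (V z))
          ≤ ∫⁻ z, C * (ENNReal.ofReal (V z) * ENNReal.ofReal (heatKernel d s x z) +
              ENNReal.ofReal (V z) * ENNReal.ofReal (heatKernel d (t - s) y z)) :=
            lintegral_mono hpt
        _ = _ := by
            rw [lintegral_const_mul]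
            · congr 1
              apply lintegral_add_left
              exact hVmeas.ennreal_ofReal.mul ((measurable_heat_z d s x).ennreal_ofReal)
            · refine Measurable.add (f := fun z => ENNReal.ofReal (V z) * ENNReal.ofReal (heatKernel d s x z))
                (g := fun z => ENNReal.ofReal (V z) * ENNReal.ofReal (heatKernel d (t - s) y z)) ?_ ?_
              · exact hVmeas.ennreal_ofReal.mul ((measurable_heat_z d s x).ennreal_ofReal)
              · apply hVmeas.ennreal_ofReal.mul
                apply Measurable.ennreal_ofReal
                exact measurable_heat_z d (t - s) y
    -- measurable inner integrals in s
    have hI1meas : Measurable fun s => ∫⁻ z, ENNReal.ofReal (V z) *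
        ENNReal.ofReal (heatKernel d s x z) := by
      apply Measurable.lintegral_prod_right'
        (f := fun q : ℝ × EuclideanSpace ℝ (Fin d) =>
          ENNReal.ofReal (V q.2) * ENNReal.ofReal (heatKernel d q.1 x q.2))
      exact ((hVmeas.comp measurable_snd).ennreal_ofReal).mul
        ((measurable_heat d x).ennreal_ofReal)
    have hI2meas : Measurable fun s => ∫⁻ z, ENNReal.ofReal (V z) *
        ENNReal.ofReal (heatKernel d (t - s) y z) := by
      apply Measurable.lintegral_prod_right'
        (f := fun q : ℝ × EuclideanSpace ℝ (Fin d) =>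
          ENNReal.ofReal (V q.2) * ENNReal.ofReal (heatKernel d (t - q.1) y q.2))
      apply ((hVmeas.comp measurable_snd).ennreal_ofReal).mul
      apply Measurable.ennreal_ofReal
      exact (measurable_heat d y).comp
        ((measurable_const.sub measurable_fst).prodMk measurable_snd)
    -- combine
    have hstep : (∫⁻ ω, F ω ∂μ)
        ≤ C * ((∫⁻ s in Set.Ioo (0:ℝ) t, ∫⁻ z, ENNReal.ofReal (V z) *
              ENNReal.ofReal (heatKernel d s x z)) +
            ∫⁻ s in Set.Ioo (0:ℝ) t, ∫⁻ z, ENNReal.ofReal (V z) *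
              ENNReal.ofReal (heatKernel d (t - s) y z)) := by
      rw [hswap, hIoo]
      have h1 : (∫⁻ s in Set.Ioo (0:ℝ) t, ∫⁻ ω, ENNReal.ofReal (V (e s ω)) ∂μ)
          ≤ ∫⁻ s in Set.Ioo (0:ℝ) t,
              C * ((∫⁻ z, ENNReal.ofReal (V z) * ENNReal.ofReal (heatKernel d s x z)) +
                ∫⁻ z, ENNReal.ofReal (V z) * ENNReal.ofReal (heatKernel d (t - s) y z)) := by
        apply setLIntegral_mono (by
          exact (measurable_const.mul (hI1meas.add hI2meas)))
        intro s hs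
        rw [hmargf s hs]
        exact hbound s hs
      refine h1.trans_eq ?_
      rw [lintegral_const_mul _ (show Measurable fun s => (∫⁻ z, ENNReal.ofReal (V z) *
        ENNReal.ofReal (heatKernel d s x z)) + ∫⁻ z, ENNReal.ofReal (V z) *
        ENNReal.ofReal (heatKernel d (t - s) y z) from hI1meas.add hI2meas)]
      congr 1
      exact lintegral_add_left hI1meas _
    -- evaluate the two s-integrals
    have hJ1 : (∫⁻ s in Set.Ioo (0:ℝ) t, ∫⁻ z, ENNReal.ofReal (V z) *
          ENNReal.ofReal (heatKernel d s x z))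
        = ∫⁻ z, ENNReal.ofReal (V z) * ENNReal.ofReal (GammaKer d t x z) := by
      rw [swap1 x, ← key x]
      apply lintegral_congr
      intro z
      congr 1
      exact setLIntegral_congr (Ioo_ae_eq_Ioc)
    have hsub : (∫⁻ s in Set.Ioo (0:ℝ) t, ∫⁻ z, ENNReal.ofReal (V z) *
          ENNReal.ofReal (heatKernel d (t - s) y z))
        = ∫⁻ u in Set.Ioo (0:ℝ) t, ∫⁻ z, ENNReal.ofReal (V z) *
          ENNReal.ofReal (heatKernel d u y z) := by
      have hpre : (fun u : ℝ => t - u) ⁻¹' (Set.Ioo (0:ℝ) t) = Set.Ioo (0:ℝ) t := by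
        ext u
        simp only [Set.mem_preimage, Set.mem_Ioo]
        constructor <;> rintro ⟨h1, h2⟩ <;> constructor <;> linarith
      have := (Measure.measurePreserving_sub_left
          (volume : Measure ℝ) t).setLIntegral_comp_preimage_emb
        (MeasurableEquiv.subLeft t).measurableEmbedding
        (fun u => ∫⁻ z, ENNReal.ofReal (V z) * ENNReal.ofReal (heatKernel d u y z))
        (Set.Ioo (0:ℝ) t)
      rw [hpre] at this
      exact this
    have hJ2 : (∫⁻ s in Set.Ioo (0:ℝ) t, ∫⁻ z, ENNReal.ofReal (V z) *
          ENNReal.ofReal (heatKernel d (t - s) y z))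
        = ∫⁻ z, ENNReal.ofReal (V z) * ENNReal.ofReal (GammaKer d t y z) := by
      rw [hsub, swap1 y, ← key y]
      apply lintegral_congr
      intro z
      congr 1
      exact setLIntegral_congr (Ioo_ae_eq_Ioc)
    rw [hJ1, hJ2] at hstep
    exact (hstep.trans_lt (ENNReal.mul_lt_top (hCdef ▸ ENNReal.ofReal_lt_top) hconv)).ne
  -- ====== soft part: Markov inequality and conclusion ======
  set E : ℝ≥0∞ := ∫⁻ ω, F ω ∂μ with hEdef
  set A : ℝ := 2 * E.toReal / p + 1 with hAdef
  have hA1 : (1:ℝ) ≤ A := by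
    rw [hAdef]
    have : 0 ≤ 2 * E.toReal / p := by positivity
    linarith
  have hA0 : (0:ℝ) < A := by linarith
  set A' : ℝ≥0∞ := ENNReal.ofReal A with hA'def
  have hA'0 : A' ≠ 0 := (ENNReal.ofReal_pos.mpr hA0).ne'
  have hA't : A' ≠ ⊤ := ENNReal.ofReal_ne_top
  -- Markov
  have hmarkov : μ {ω | A' ≤ F ω} ≤ ENNReal.ofReal (p / 2) := by
    have h1 : μ {ω | A' ≤ F ω} ≤ E / A' :=
      meas_ge_le_lintegral_div hFmeas.aemeasurable hA'0 hA't
    refine h1.trans ?_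
    apply ENNReal.div_le_of_le_mul
    have h2 : E.toReal ≤ (p / 2) * A := by
      have h3 : (p / 2) * A = E.toReal + p / 2 := by
        field_simp [hAdef]
        rw [hAdef]
        field_simp
      nlinarith
    calc E = ENNReal.ofReal E.toReal := (ENNReal.ofReal_toReal hE).symm
      _ ≤ ENNReal.ofReal ((p / 2) * A) := ENNReal.ofReal_le_ofReal h2
      _ = ENNReal.ofReal (p / 2) * A' := ENNReal.ofReal_mul (by positivity)
  set S : Set Ω := {ω | F ω < A'} with hSdef
  have hSmeas : MeasurableSet S := measurableSet_lt hFmeas measurable_const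
  have hScompl : Sᶜ = {ω | A' ≤ F ω} := by
    ext ω
    simp [hSdef, not_lt]
  have hmuS : ENNReal.ofReal (p / 2) ≤ μ S := by
    have h1 : ENNReal.ofReal p ≤ μ S + μ Sᶜ := by
      have := measure_union_le (μ := μ) S Sᶜ
      rwa [Set.union_compl_self, hmass] at this
    have h2 : ENNReal.ofReal p ≤ μ S + ENNReal.ofReal (p / 2) :=
      h1.trans (add_le_add_right (hScompl ▸ hmarkov) _)
    have h3 : ENNReal.ofReal p = ENNReal.ofReal (p / 2) + ENNReal.ofReal (p / 2) := by
      rw [← ENNReal.ofReal_add (by positivity) (by positivity)]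
      norm_num
    rw [h3] at h2
    exact (ENNReal.add_le_add_iff_right ENNReal.ofReal_ne_top).mp h2
  have hexpNegMeas : Measurable expNeg := by
    have hsetm : MeasurableSet {y : ℝ≥0∞ | y = ⊤} := by
      rw [Set.setOf_eq_eq_singleton]
      exact measurableSet_singleton _
    exact Measurable.ite hsetm measurable_const
      ((ENNReal.measurable_toReal.neg).exp).ennreal_ofReal
  have hlow : ENNReal.ofReal (Real.exp (-A)) * ENNReal.ofReal (p / 2)
      ≤ ∫⁻ ω, expNeg (F ω) ∂μ := by
    calc ENNReal.ofReal (Real.exp (-A)) * ENNReal.ofReal (p / 2)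
        ≤ ENNReal.ofReal (Real.exp (-A)) * μ S := mul_le_mul_right hmuS _
      _ = ∫⁻ _ in S, ENNReal.ofReal (Real.exp (-A)) ∂μ := (setLIntegral_const _ _).symm
      _ ≤ ∫⁻ ω in S, expNeg (F ω) ∂μ := by
          apply setLIntegral_mono (hexpNegMeas.comp hFmeas)
          intro ω hω
          have hωlt : F ω < A' := hω
          have hne : F ω ≠ ⊤ := hωlt.trans_le le_top |>.ne
          show ENNReal.ofReal (Real.exp (-A)) ≤ expNeg (F ω)
          rw [show expNeg (F ω)
              = ENNReal.ofReal (Real.exp (-(F ω).toReal)) from if_neg hne]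
          apply ENNReal.ofReal_le_ofReal
          apply Real.exp_le_exp.mpr
          simp only [neg_le_neg_iff]
          exact ENNReal.toReal_le_of_le_ofReal hA0.le hωlt.le
      _ ≤ ∫⁻ ω, expNeg (F ω) ∂μ := setLIntegral_le_lintegral _ _
  have heq : ENNReal.ofReal ((1 / 2) * Real.exp (-A) * p)
      = ENNReal.ofReal (Real.exp (-A)) * ENNReal.ofReal (p / 2) := by
    rw [← ENNReal.ofReal_mul (Real.exp_pos _).le]
    congr 1
    ring
  have hmain : ENNReal.ofReal ((1 / 2) * Real.exp (-A) * p)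
      ≤ ∫⁻ ω, expNeg (F ω) ∂μ := heq.le.trans hlow
  have hpos : (0:ℝ≥0∞) < ENNReal.ofReal ((1 / 2) * Real.exp (-A) * p) := by
    apply ENNReal.ofReal_pos.mpr
    positivity
  exact ⟨A, hmain, lt_of_lt_of_le hpos hmain⟩
end
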